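/- For all u₁, u₂, v ∈ ℂ such that θ is nonzero at each of v, u₁−v, u₂+v, u₁−u₂−v and u₂−u₁+v, the combination f(u₁,u₂,v) = E₁(v) − E₁(u₁−u₂−v) + E₁(u₁−v) − E₁(u₂+v) admits the closed product formula f(u₁,u₂,v) = θ'(0)·θ(u₁)·θ(u₂)·θ(u₂−u₁+2v) / ( θ(u₁−v)·θ(u₂+v)·θ(u₂−u₁+v)·θ(v) ). -/

import Mathlib

open Complex Real

noncomputable section

/-- The odd Jacobi theta function
`θ(z) = q^{1/8} · Σ_{n ∈ ℤ} (−1)^n exp(2πi( n(n+1)τ/2 + n z ))`, `q = exp(2πiτ)`. -/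
def theta (τ z : ℂ) : ℂ :=
  Complex.exp (2 * (Real.pi : ℂ) * I * τ / 8) *
    ∑' n : ℤ, (-1 : ℂ) ^ n *
      Complex.exp (2 * (Real.pi : ℂ) * I * ((n : ℂ) * ((n : ℂ) + 1) * τ / 2 + (n : ℂ) * z))

/-- The derivative `θ'` of `θ` in `z`. -/
def theta' (τ : ℂ) : ℂ → ℂ := deriv (theta τ)

/-- `E₁(z) = θ'(z)/θ(z)`. -/
def E₁ (τ z : ℂ) : ℂ := theta' τ z / theta τ z

/-- `E₂(z) = −E₁'(z)`. -/
def E₂ (τ z : ℂ) : ℂ := - deriv (fun w => E₁ τ w) z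

/-- The Kronecker function `φ(u,z) = θ(u+z)·θ'(0)/(θ(u)·θ(z))`. -/
def phi (τ u z : ℂ) : ℂ := theta τ (u + z) * theta' τ 0 / (theta τ u * theta τ z)

namespace FPF

/-! ### An odd theta function `Th`, expressed via `jacobiTheta₂` -/

/-- The odd theta function (Jacobi θ₁-type), via `jacobiTheta₂`. -/
def Th (τ z : ℂ) : ℂ :=
  cexp ((π : ℂ) * I * τ / 4 + (π : ℂ) * I * z) * jacobiTheta₂ (z + (τ + 1) / 2) τ

/-- Its `z`-derivative. -/
def Th' (τ z : ℂ) : ℂ :=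
  cexp ((π : ℂ) * I * τ / 4 + (π : ℂ) * I * z) *
    ((π : ℂ) * I * jacobiTheta₂ (z + (τ + 1) / 2) τ + jacobiTheta₂' (z + (τ + 1) / 2) τ)

/-- Series term for `Th`. -/
def thterm (τ : ℂ) (n : ℤ) (z : ℂ) : ℂ :=
  cexp ((π : ℂ) * I * τ * ((n : ℂ) + 1/2)^2 + 2 * (π : ℂ) * I * ((n : ℂ) + 1/2) * z
      + (n : ℂ) * ((π : ℂ) * I))

/-- Series term for the order-two theta functions. -/
def qterm (τ : ℂ) (m : ℤ) (w : ℂ) : ℂ :=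
  cexp ((π : ℂ) * I * τ * (m : ℂ)^2 / 2 + 2 * (π : ℂ) * I * (m : ℂ) * w)

def P0 (τ w : ℂ) : ℂ := ∑' k : ℤ, qterm τ (2*k) w
def P1 (τ w : ℂ) : ℂ := ∑' k : ℤ, qterm τ (2*k+1) w

lemma summable_norm_jt (z : ℂ) {τ : ℂ} (hτ : 0 < τ.im) :
    Summable (fun n : ℤ => ‖jacobiTheta₂_term n z τ‖) := by
  apply Summable.of_nonneg_of_le (fun n => norm_nonneg _)
    (fun n => norm_jacobiTheta₂_term_le hτ (le_refl |z.im|) le_rfl n)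
  simpa only [pow_zero, one_mul] using
    summable_pow_mul_jacobiTheta₂_term_bound |z.im| hτ 0

lemma thterm_eq (τ : ℂ) (n : ℤ) (z : ℂ) :
    thterm τ n z = cexp ((π : ℂ) * I * τ / 4 + (π : ℂ) * I * z) *
      jacobiTheta₂_term n (z + (τ + 1) / 2) τ := by
  rw [thterm, jacobiTheta₂_term, ← Complex.exp_add]
  congr 1
  ring

lemma summable_norm_thterm {τ : ℂ} (hτ : 0 < τ.im) (z : ℂ) :
    Summable (fun n => ‖thterm τ n z‖) := by
  simp only [thterm_eq, norm_mul]
  exact (summable_norm_jt _ hτ).mul_left _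

lemma hasSum_Th {τ : ℂ} (hτ : 0 < τ.im) (z : ℂ) :
    HasSum (fun n => thterm τ n z) (Th τ z) := by
  have h := (hasSum_jacobiTheta₂_term (z + (τ + 1) / 2) hτ).mul_left
    (cexp ((π : ℂ) * I * τ / 4 + (π : ℂ) * I * z))
  rw [Th]
  simpa only [← thterm_eq] using h

lemma neg_one_zpow (n : ℤ) : (-1 : ℂ) ^ n = cexp ((n : ℂ) * ((π : ℂ) * I)) := by
  rw [Complex.exp_int_mul, Complex.exp_pi_mul_I]

lemma theta_eq (τ z : ℂ) : theta τ z = cexp (-(π : ℂ) * I * z) * Th τ z := by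
  rw [theta, Th, jacobiTheta₂, ← mul_assoc, ← tsum_mul_left, ← tsum_mul_left]
  refine tsum_congr fun n => ?_
  rw [neg_one_zpow, jacobiTheta₂_term, ← Complex.exp_add, ← Complex.exp_add,
    ← Complex.exp_add, ← Complex.exp_add]
  congr 1
  ring

lemma Th_neg (τ z : ℂ) : Th τ (-z) = - Th τ z := by
  have h1 : (-z + (τ + 1) / 2) = -(z - (τ + 1) / 2) := by ring
  have h2 : z + (τ + 1) / 2 = (z - (τ + 1) / 2 + τ) + 1 := by ring
  rw [Th, h1, jacobiTheta₂_neg_left, Th]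
  rw [h2, jacobiTheta₂_add_left, jacobiTheta₂_add_left', ← mul_assoc, ← Complex.exp_add]
  rw [show (π : ℂ) * I * τ / 4 + (π : ℂ) * I * z + -(π : ℂ) * I * (τ + 2 * (z - (τ + 1) / 2)) =
      (π : ℂ) * I * τ / 4 + (π : ℂ) * I * (-z) + (π : ℂ) * I by ring]
  simp only [Complex.exp_add, Complex.exp_pi_mul_I]
  ring

lemma Th_zero (τ : ℂ) : Th τ 0 = 0 := by
  have := Th_neg τ 0
  rw [neg_zero] at this
  have h2 : (2:ℂ) * Th τ 0 = 0 := by linear_combination this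
  simpa using h2

lemma hasDerivAt_Th {τ : ℂ} (hτ : 0 < τ.im) (z : ℂ) :
    HasDerivAt (Th τ) (Th' τ z) z := by
  have h1 : HasDerivAt (fun w : ℂ => jacobiTheta₂ (w + (τ + 1) / 2) τ)
      (jacobiTheta₂' (z + (τ + 1) / 2) τ) z := by
    have := (hasDerivAt_jacobiTheta₂_fst (z + (τ + 1) / 2) hτ).comp z
      ((hasDerivAt_id z).add_const ((τ + 1) / 2))
    simpa [Function.comp_def] using this
  have h2 : HasDerivAt (fun w : ℂ => cexp ((π : ℂ) * I * τ / 4 + (π : ℂ) * I * w))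
      ((π : ℂ) * I * cexp ((π : ℂ) * I * τ / 4 + (π : ℂ) * I * z)) z := by
    have hlin : HasDerivAt (fun w : ℂ => (π : ℂ) * I * τ / 4 + (π : ℂ) * I * w)
        ((π : ℂ) * I) z := by
      simpa using ((hasDerivAt_id z).const_mul ((π : ℂ) * I)).const_add ((π : ℂ) * I * τ / 4)
    simpa [mul_comm] using hlin.cexp
  have h3 := h2.mul h1
  have hval : (π : ℂ) * I * cexp ((π : ℂ) * I * τ / 4 + (π : ℂ) * I * z) *
      jacobiTheta₂ (z + (τ + 1) / 2) τ +
      cexp ((π : ℂ) * I * τ / 4 + (π : ℂ) * I * z) * jacobiTheta₂' (z + (τ + 1) / 2) τ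
      = Th' τ z := by
    rw [Th']; ring
  rw [hval] at h3
  exact h3

lemma Th'_neg {τ : ℂ} (hτ : 0 < τ.im) (z : ℂ) : Th' τ (-z) = Th' τ z := by
  have h1 : HasDerivAt (fun w : ℂ => Th τ (-w)) (-(Th' τ (-z))) z := by
    have := (hasDerivAt_Th hτ (-z)).comp z (hasDerivAt_neg z)
    simpa [Function.comp_def] using this
  have h2 : HasDerivAt (fun w : ℂ => Th τ (-w)) (-(Th' τ z)) z := by
    have hfun : (fun w : ℂ => Th τ (-w)) = fun w : ℂ => -(Th τ w) := funext fun w => Th_neg τ w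
    rw [hfun]
    exact (hasDerivAt_Th hτ z).neg
  exact neg_inj.mp (h1.unique h2)

/-! ### The order-two theta functions -/

lemma two_tau_im {τ : ℂ} (hτ : 0 < τ.im) : 0 < (2 * τ).im := by
  have : (2 * τ).im = 2 * τ.im := by simp [Complex.mul_im]
  rw [this]; linarith

lemma qterm_even (τ : ℂ) (k : ℤ) (w : ℂ) :
    qterm τ (2*k) w = jacobiTheta₂_term k (2*w) (2*τ) := by
  rw [qterm, jacobiTheta₂_term]
  congr 1
  push_cast
  ring

lemma qterm_odd (τ : ℂ) (k : ℤ) (w : ℂ) :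
    qterm τ (2*k+1) w = cexp ((π : ℂ) * I * τ / 2 + 2 * (π : ℂ) * I * w) *
      jacobiTheta₂_term k (2*w + τ) (2*τ) := by
  rw [qterm, jacobiTheta₂_term, ← Complex.exp_add]
  congr 1
  push_cast
  ring

lemma hasSum_P0 {τ : ℂ} (hτ : 0 < τ.im) (w : ℂ) :
    HasSum (fun k : ℤ => qterm τ (2*k) w) (P0 τ w) := by
  have : Summable (fun k : ℤ => qterm τ (2*k) w) := by
    simp only [qterm_even]
    exact (summable_jacobiTheta₂_term_iff _ _).2 (two_tau_im hτ)
  exact this.hasSum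

lemma hasSum_P1 {τ : ℂ} (hτ : 0 < τ.im) (w : ℂ) :
    HasSum (fun k : ℤ => qterm τ (2*k+1) w) (P1 τ w) := by
  have : Summable (fun k : ℤ => qterm τ (2*k+1) w) := by
    simp only [qterm_odd]
    exact ((summable_jacobiTheta₂_term_iff _ _).2 (two_tau_im hτ)).mul_left _
  exact this.hasSum

lemma summable_norm_qterm_even {τ : ℂ} (hτ : 0 < τ.im) (w : ℂ) :
    Summable (fun k : ℤ => ‖qterm τ (2*k) w‖) := by
  simp only [qterm_even]
  exact summable_norm_jt _ (two_tau_im hτ)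

lemma summable_norm_qterm_odd {τ : ℂ} (hτ : 0 < τ.im) (w : ℂ) :
    Summable (fun k : ℤ => ‖qterm τ (2*k+1) w‖) := by
  simp only [qterm_odd, norm_mul]
  exact (summable_norm_jt _ (two_tau_im hτ)).mul_left _

/-! ### Reindexing -/

/-- Even-difference pairs. -/
def Spar : Set (ℤ × ℤ) := {p | (p.1 - p.2) % 2 = 0}

def e₀ : ℤ × ℤ ≃ Spar where
  toFun ab := ⟨(ab.1 + ab.2, ab.1 - ab.2), by simp only [Spar, Set.mem_setOf_eq]; omega⟩
  invFun p := ((p.1.1 + p.1.2) / 2, (p.1.1 - p.1.2) / 2)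
  left_inv := by rintro ⟨a, b⟩; simp only [Prod.mk.injEq]; omega
  right_inv := by
    rintro ⟨⟨n, m⟩, h⟩
    simp only [Spar, Set.mem_setOf_eq] at h
    simp only [Subtype.mk.injEq, Prod.mk.injEq]
    omega

def e₁ : ℤ × ℤ ≃ ↥(Sparᶜ) where
  toFun ab := ⟨(ab.1 + ab.2, ab.1 - ab.2 - 1), by
    simp only [Spar, Set.mem_compl_iff, Set.mem_setOf_eq]; omega⟩
  invFun p := ((p.1.1 + p.1.2 + 1) / 2, (p.1.1 - p.1.2 - 1) / 2)
  left_inv := by rintro ⟨a, b⟩; simp only [Prod.mk.injEq]; omega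
  right_inv := by
    rintro ⟨⟨n, m⟩, h⟩
    simp only [Spar, Set.mem_compl_iff, Set.mem_setOf_eq] at h
    simp only [Subtype.mk.injEq, Prod.mk.injEq]
    omega

lemma termA (τ x y : ℂ) (a b : ℤ) :
    thterm τ (a + b) (x + y) * thterm τ (a - b) (x - y) =
      qterm τ (2*a+1) x * qterm τ (2*b) y := by
  rw [thterm, thterm, qterm, qterm, ← Complex.exp_add, ← Complex.exp_add]
  rw [show ((π:ℂ) * I * τ * (((a+b : ℤ) : ℂ) + 1/2)^2 + 2 * (π:ℂ) * I * (((a+b : ℤ) : ℂ) + 1/2) * (x+y)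
        + ((a+b : ℤ) : ℂ) * ((π:ℂ) * I))
      + ((π:ℂ) * I * τ * (((a-b : ℤ) : ℂ) + 1/2)^2 + 2 * (π:ℂ) * I * (((a-b : ℤ) : ℂ) + 1/2) * (x-y)
        + ((a-b : ℤ) : ℂ) * ((π:ℂ) * I))
      = ((π:ℂ) * I * τ * ((2*a+1 : ℤ) : ℂ)^2 / 2 + 2 * (π:ℂ) * I * ((2*a+1 : ℤ) : ℂ) * x
        + ((π:ℂ) * I * τ * ((2*b : ℤ) : ℂ)^2 / 2 + 2 * (π:ℂ) * I * ((2*b : ℤ) : ℂ) * y))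
        + (a : ℂ) * (2 * (π:ℂ) * I) by push_cast; ring]
  rw [Complex.exp_add, Complex.exp_int_mul_two_pi_mul_I, mul_one]

lemma termB (τ x y : ℂ) (a b : ℤ) :
    thterm τ (a + b) (x + y) * thterm τ (a - b - 1) (x - y) =
      -(qterm τ (2*a) x * qterm τ (2*b+1) y) := by
  rw [thterm, thterm, qterm, qterm, ← Complex.exp_add, ← Complex.exp_add]
  rw [show ((π:ℂ) * I * τ * (((a+b : ℤ) : ℂ) + 1/2)^2 + 2 * (π:ℂ) * I * (((a+b : ℤ) : ℂ) + 1/2) * (x+y)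
        + ((a+b : ℤ) : ℂ) * ((π:ℂ) * I))
      + ((π:ℂ) * I * τ * (((a-b-1 : ℤ) : ℂ) + 1/2)^2 + 2 * (π:ℂ) * I * (((a-b-1 : ℤ) : ℂ) + 1/2) * (x-y)
        + ((a-b-1 : ℤ) : ℂ) * ((π:ℂ) * I))
      = (((π:ℂ) * I * τ * ((2*a : ℤ) : ℂ)^2 / 2 + 2 * (π:ℂ) * I * ((2*a : ℤ) : ℂ) * x
        + ((π:ℂ) * I * τ * ((2*b+1 : ℤ) : ℂ)^2 / 2 + 2 * (π:ℂ) * I * ((2*b+1 : ℤ) : ℂ) * y))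
        + (π:ℂ) * I) + ((a - 1 : ℤ) : ℂ) * (2 * (π:ℂ) * I) by push_cast; ring]
  rw [Complex.exp_add, Complex.exp_int_mul_two_pi_mul_I, mul_one, Complex.exp_add,
    Complex.exp_pi_mul_I]
  ring

/-! ### The quadratic product decomposition and the three-term identity -/

lemma Th_mul_Th {τ : ℂ} (hτ : 0 < τ.im) (x y : ℂ) :
    Th τ (x + y) * Th τ (x - y) = P1 τ x * P0 τ y - P0 τ x * P1 τ y := by
  have hA : HasSum (fun ab : ℤ × ℤ => qterm τ (2*ab.1+1) x * qterm τ (2*ab.2) y)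
      (P1 τ x * P0 τ y) :=
    HasSum.mul (f := fun k : ℤ => qterm τ (2*k+1) x) (g := fun k : ℤ => qterm τ (2*k) y)
      (hasSum_P1 hτ x) (hasSum_P0 hτ y)
      (summable_mul_of_summable_norm (f := fun k : ℤ => qterm τ (2*k+1) x)
        (g := fun k : ℤ => qterm τ (2*k) y)
        (summable_norm_qterm_odd hτ x) (summable_norm_qterm_even hτ y))
  have hB : HasSum (fun ab : ℤ × ℤ => -(qterm τ (2*ab.1) x * qterm τ (2*ab.2+1) y))
      (-(P0 τ x * P1 τ y)) :=
    (HasSum.mul (f := fun k : ℤ => qterm τ (2*k) x) (g := fun k : ℤ => qterm τ (2*k+1) y)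
      (hasSum_P0 hτ x) (hasSum_P1 hτ y)
      (summable_mul_of_summable_norm (f := fun k : ℤ => qterm τ (2*k) x)
        (g := fun k : ℤ => qterm τ (2*k+1) y)
        (summable_norm_qterm_even hτ x) (summable_norm_qterm_odd hτ y))).neg
  have hS : HasSum ((fun p : ℤ × ℤ => thterm τ p.1 (x + y) * thterm τ p.2 (x - y)) ∘
      ((↑) : Spar → ℤ × ℤ)) (P1 τ x * P0 τ y) := by
    rw [← Equiv.hasSum_iff e₀]
    have hfun : ((fun p : ℤ × ℤ => thterm τ p.1 (x + y) * thterm τ p.2 (x - y)) ∘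
        ((↑) : Spar → ℤ × ℤ)) ∘ e₀ =
        fun ab : ℤ × ℤ => qterm τ (2*ab.1+1) x * qterm τ (2*ab.2) y :=
      funext fun ab => termA τ x y ab.1 ab.2
    rw [hfun]
    exact hA
  have hSc : HasSum ((fun p : ℤ × ℤ => thterm τ p.1 (x + y) * thterm τ p.2 (x - y)) ∘
      ((↑) : ↥(Sparᶜ) → ℤ × ℤ)) (-(P0 τ x * P1 τ y)) := by
    rw [← Equiv.hasSum_iff e₁]
    have hfun : ((fun p : ℤ × ℤ => thterm τ p.1 (x + y) * thterm τ p.2 (x - y)) ∘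
        ((↑) : ↥(Sparᶜ) → ℤ × ℤ)) ∘ e₁ =
        fun ab : ℤ × ℤ => -(qterm τ (2*ab.1) x * qterm τ (2*ab.2+1) y) :=
      funext fun ab => termB τ x y ab.1 ab.2
    rw [hfun]
    exact hB
  have htot : HasSum (fun p : ℤ × ℤ => thterm τ p.1 (x + y) * thterm τ p.2 (x - y))
      (P1 τ x * P0 τ y + -(P0 τ x * P1 τ y)) := hS.add_compl hSc
  have h1 : Th τ (x + y) * Th τ (x - y) =
      ∑' p : ℤ × ℤ, thterm τ p.1 (x + y) * thterm τ p.2 (x - y) := by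
    rw [← (hasSum_Th hτ (x + y)).tsum_eq, ← (hasSum_Th hτ (x - y)).tsum_eq]
    exact tsum_mul_tsum_of_summable_norm (summable_norm_thterm hτ _) (summable_norm_thterm hτ _)
  rw [h1, htot.tsum_eq, ← sub_eq_add_neg]

lemma riemann {τ : ℂ} (hτ : 0 < τ.im) (x y z t : ℂ) :
    Th τ (x+y) * Th τ (x-y) * (Th τ (z+t) * Th τ (z-t))
    - Th τ (x+z) * Th τ (x-z) * (Th τ (y+t) * Th τ (y-t))
    + Th τ (x+t) * Th τ (x-t) * (Th τ (y+z) * Th τ (y-z)) = 0 := by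
  rw [Th_mul_Th hτ x y, Th_mul_Th hτ z t, Th_mul_Th hτ x z, Th_mul_Th hτ y t,
    Th_mul_Th hτ x t, Th_mul_Th hτ y z]
  ring

/-! ### Differentiating the three-term identity -/

lemma hasDerivAt_pair {τ : ℂ} (hτ : 0 < τ.im) (a t : ℂ) :
    HasDerivAt (fun s : ℂ => Th τ (a + s) * Th τ (a - s))
      (Th' τ (a + t) * Th τ (a - t) - Th τ (a + t) * Th' τ (a - t)) t := by
  have h1 : HasDerivAt (fun s : ℂ => Th τ (a + s)) (Th' τ (a + t)) t := by
    have := (hasDerivAt_Th hτ (a + t)).comp t ((hasDerivAt_id t).const_add a)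
    simpa [Function.comp_def] using this
  have h2 : HasDerivAt (fun s : ℂ => Th τ (a - s)) (-(Th' τ (a - t))) t := by
    have := (hasDerivAt_Th hτ (a - t)).comp t ((hasDerivAt_id t).const_sub a)
    simpa [Function.comp_def] using this
  have h3 : HasDerivAt (fun s : ℂ => Th τ (a + s) * Th τ (a - s)) _ t := h1.mul h2
  convert h3 using 1
  ring

lemma key {τ : ℂ} (hτ : 0 < τ.im) (u₁ u₂ v : ℂ) :
    Th' τ v * Th τ (u₁-u₂-v) * (Th τ (u₁-v) * Th τ (u₂+v))
    - Th τ v * Th' τ (u₁-u₂-v) * (Th τ (u₁-v) * Th τ (u₂+v))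
    + Th τ v * Th τ (u₁-u₂-v) * (Th' τ (u₁-v) * Th τ (u₂+v))
    - Th τ v * Th τ (u₁-u₂-v) * (Th τ (u₁-v) * Th' τ (u₂+v))
    = -(Th' τ 0 * Th τ u₁ * Th τ u₂ * Th τ (u₂-u₁+2*v)) := by
  set x : ℂ := (u₂-u₁)/2 + v with hx
  set y : ℂ := (u₁-u₂)/2 with hy
  set z : ℂ := -(u₁+u₂)/2 with hz
  have hD : HasDerivAt
      (fun t : ℂ => Th τ (x+y) * Th τ (x-y) * (Th τ (z+t) * Th τ (z-t))
        - Th τ (x+z) * Th τ (x-z) * (Th τ (y+t) * Th τ (y-t))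
        + Th τ (x+t) * Th τ (x-t) * (Th τ (y+z) * Th τ (y-z)))
      (Th τ (x+y) * Th τ (x-y) * (Th' τ (z+x) * Th τ (z-x) - Th τ (z+x) * Th' τ (z-x))
        - Th τ (x+z) * Th τ (x-z) * (Th' τ (y+x) * Th τ (y-x) - Th τ (y+x) * Th' τ (y-x))
        + (Th' τ (x+x) * Th τ (x-x) - Th τ (x+x) * Th' τ (x-x)) * (Th τ (y+z) * Th τ (y-z)))
      x := by
    exact (((hasDerivAt_pair hτ z x).const_mul (Th τ (x+y) * Th τ (x-y))).sub
      ((hasDerivAt_pair hτ y x).const_mul (Th τ (x+z) * Th τ (x-z)))).add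
      ((hasDerivAt_pair hτ x x).mul_const (Th τ (y+z) * Th τ (y-z)))
  have hfun : (fun t : ℂ => Th τ (x+y) * Th τ (x-y) * (Th τ (z+t) * Th τ (z-t))
        - Th τ (x+z) * Th τ (x-z) * (Th τ (y+t) * Th τ (y-t))
        + Th τ (x+t) * Th τ (x-t) * (Th τ (y+z) * Th τ (y-z))) = fun _ => (0:ℂ) :=
    funext fun t => riemann hτ x y z t
  rw [hfun] at hD
  have heq := hD.unique (hasDerivAt_const x (0:ℂ))
  have e1 : x + y = v := by rw [hx, hy]; ring
  have e2 : x - y = u₂ - u₁ + v := by rw [hx, hy]; ring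
  have e3 : x + z = v - u₁ := by rw [hx, hz]; ring
  have e4 : x - z = u₂ + v := by rw [hx, hz]; ring
  have e5 : z + x = v - u₁ := by rw [hx, hz]; ring
  have e6 : z - x = -(u₂ + v) := by rw [hx, hz]; ring
  have e7 : y + x = v := by rw [hx, hy]; ring
  have e8 : y - x = u₁ - u₂ - v := by rw [hx, hy]; ring
  have e9 : x + x = u₂ - u₁ + 2*v := by rw [hx]; ring
  have e10 : x - x = 0 := by ring
  have e11 : y + z = -u₂ := by rw [hy, hz]; ring
  have e12 : y - z = u₁ := by rw [hy, hz]; ring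
  rw [e1, e2, e3, e4, e5, e6, e7, e8, e9, e10, e11, e12] at heq
  rw [Th_zero, Th_neg τ (u₂ + v), Th'_neg hτ (u₂ + v), Th_neg τ u₂,
    show u₂ - u₁ + v = -(u₁ - u₂ - v) by ring, Th_neg τ (u₁ - u₂ - v),
    show v - u₁ = -(u₁ - v) by ring, Th_neg τ (u₁ - v), Th'_neg hτ (u₁ - v)] at heq
  linear_combination heq

/-! ### Back to `theta` -/

lemma hasDerivAt_theta {τ : ℂ} (hτ : 0 < τ.im) (z : ℂ) :
    HasDerivAt (theta τ) (cexp (-(π : ℂ) * I * z) * (Th' τ z - (π : ℂ) * I * Th τ z)) z := by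
  have hexp : HasDerivAt (fun w : ℂ => cexp (-(π : ℂ) * I * w))
      (-(π : ℂ) * I * cexp (-(π : ℂ) * I * z)) z := by
    have hlin : HasDerivAt (fun w : ℂ => -(π : ℂ) * I * w) (-(π : ℂ) * I) z := by
      simpa using (hasDerivAt_id z).const_mul (-(π : ℂ) * I)
    simpa [mul_comm] using hlin.cexp
  have h : HasDerivAt (fun w : ℂ => cexp (-(π : ℂ) * I * w) * Th τ w) _ z :=
    hexp.mul (hasDerivAt_Th hτ z)
  have hfun : (fun w : ℂ => cexp (-(π : ℂ) * I * w) * Th τ w) = theta τ :=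
    funext fun w => (theta_eq τ w).symm
  rw [hfun] at h
  convert h using 1
  ring

lemma theta'_eq {τ : ℂ} (hτ : 0 < τ.im) (z : ℂ) :
    theta' τ z = cexp (-(π : ℂ) * I * z) * (Th' τ z - (π : ℂ) * I * Th τ z) :=
  (hasDerivAt_theta hτ z).deriv

lemma theta'_zero {τ : ℂ} (hτ : 0 < τ.im) : theta' τ 0 = Th' τ 0 := by
  rw [theta'_eq hτ 0, Th_zero]
  simp

lemma Th_ne {τ w : ℂ} (h : theta τ w ≠ 0) : Th τ w ≠ 0 := by
  rw [theta_eq] at h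
  exact fun hh => h (by rw [hh, mul_zero])

lemma E₁_eq {τ : ℂ} (hτ : 0 < τ.im) {z : ℂ} (h : theta τ z ≠ 0) :
    E₁ τ z = Th' τ z / Th τ z - (π : ℂ) * I := by
  have hT := Th_ne h
  rw [E₁, theta'_eq hτ, theta_eq, mul_div_mul_left _ _ (Complex.exp_ne_zero _)]
  field_simp

attribute [irreducible] Th Th'

end FPF

set_option maxHeartbeats 1000000 in
open FPF in
/-- The combination `f(u₁,u₂,v) = E₁(v) − E₁(u₁−u₂−v) + E₁(u₁−v) − E₁(u₂+v)` admits the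
closed product formula
`f(u₁,u₂,v) = θ'(0)·θ(u₁)·θ(u₂)·θ(u₂−u₁+2v) / ( θ(u₁−v)·θ(u₂+v)·θ(u₂−u₁+v)·θ(v) )`. -/
theorem f_product_formula (τ : ℂ) (hτ : 0 < τ.im) (u₁ u₂ v : ℂ)
    (h1 : theta τ v ≠ 0) (h2 : theta τ (u₁ - v) ≠ 0) (h3 : theta τ (u₂ + v) ≠ 0)
    (h4 : theta τ (u₁ - u₂ - v) ≠ 0) (h5 : theta τ (u₂ - u₁ + v) ≠ 0) :
    E₁ τ v - E₁ τ (u₁ - u₂ - v) + E₁ τ (u₁ - v) - E₁ τ (u₂ + v) =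
      theta' τ 0 * theta τ u₁ * theta τ u₂ * theta τ (u₂ - u₁ + 2 * v) /
        (theta τ (u₁ - v) * theta τ (u₂ + v) * theta τ (u₂ - u₁ + v) * theta τ v) := by
  have hv := Th_ne h1; have hB := Th_ne h2; have hC := Th_ne h3
  have hA := Th_ne h4; have h5' := Th_ne h5
  have o5 : Th τ (u₂ - u₁ + v) = -(Th τ (u₁ - u₂ - v)) := by
    rw [show u₂ - u₁ + v = -(u₁ - u₂ - v) by ring, Th_neg]
  have hRHS : theta' τ 0 * theta τ u₁ * theta τ u₂ * theta τ (u₂ - u₁ + 2 * v) /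
        (theta τ (u₁ - v) * theta τ (u₂ + v) * theta τ (u₂ - u₁ + v) * theta τ v)
      = Th' τ 0 * Th τ u₁ * Th τ u₂ * Th τ (u₂ - u₁ + 2 * v) /
        (Th τ (u₁ - v) * Th τ (u₂ + v) * Th τ (u₂ - u₁ + v) * Th τ v) := by
    rw [theta'_zero hτ, theta_eq τ u₁, theta_eq τ u₂, theta_eq τ (u₂ - u₁ + 2*v),
      theta_eq τ (u₁ - v), theta_eq τ (u₂ + v), theta_eq τ (u₂ - u₁ + v), theta_eq τ v]
    rw [div_eq_div_iff
      (by apply_rules [mul_ne_zero, Complex.exp_ne_zero])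
      (by apply_rules [mul_ne_zero, Complex.exp_ne_zero])]
    have hE : cexp (-(π:ℂ) * I * u₁) * cexp (-(π:ℂ) * I * u₂) * cexp (-(π:ℂ) * I * (u₂ - u₁ + 2*v))
        = cexp (-(π:ℂ) * I * (u₁ - v)) * cexp (-(π:ℂ) * I * (u₂ + v)) *
          cexp (-(π:ℂ) * I * (u₂ - u₁ + v)) * cexp (-(π:ℂ) * I * v) := by
      rw [← Complex.exp_add, ← Complex.exp_add, ← Complex.exp_add, ← Complex.exp_add,
        ← Complex.exp_add]
      congr 1
      ring
    linear_combination (Th' τ 0 * Th τ u₁ * Th τ u₂ * Th τ (u₂ - u₁ + 2*v) *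
      Th τ (u₁ - v) * Th τ (u₂ + v) * Th τ (u₂ - u₁ + v) * Th τ v) * hE
  rw [hRHS, E₁_eq hτ h1, E₁_eq hτ h2, E₁_eq hτ h3, E₁_eq hτ h4, o5]
  have hk := key hτ u₁ u₂ v
  field_simp
  rw [show 2 * v = v * 2 by ring] at hk
  linear_combination hk

end
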